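/- Let A be an n×n real matrix and Δ an invertible diagonal n×n matrix such that Δ⁻¹·A·Δ is symmetric. Then for any sequence of distinct indices i₁, ..., i_k, the product A(i₁,i₂)·A(i₂,i₃)···A(i_{k-1},i_k)·A(i_k,i₁) equals A(i₁,i_k)·A(i_k,i_{k-1})···A(i₃,i₂)·A(i₂,i₁). -/
import Mathlib


open Matrix

/- Statement 2: If Δ is an invertible diagonal matrix with Δ⁻¹ A Δ symmetric, then for any
sequence of distinct indices i₁,...,i_k the cyclic product of entries of A equals the
cyclic product along the reversed cycle. -/
theorem stmt_2 (n : ℕ) (A Δ : Matrix (Fin n) (Fin n) ℝ)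
    (hΔdiag : Δ.IsDiag) (hΔunit : IsUnit Δ.det)
    (hsym : (Δ⁻¹ * A * Δ)ᵀ = Δ⁻¹ * A * Δ) :
    ∀ (k : ℕ) (v : Fin k → Fin n), Function.Injective v →
      (∏ j : Fin k, A (v j) (v (finRotate k j))) =
        ∏ j : Fin k, A (v (finRotate k j)) (v j) := by
  intro k v _
  -- diagonal entries are nonzero
  have hdet : Δ.det = ∏ i, Δ i i := by
    conv_lhs => rw [← hΔdiag.diagonal_diag]
    simp [Matrix.det_diagonal, Matrix.diag]
  have hd : ∀ i, Δ i i ≠ 0 := by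
    intro i hi
    rw [hdet] at hΔunit
    exact hΔunit.ne_zero (Finset.prod_eq_zero (Finset.mem_univ i) hi)
  -- key relation from Δ² Aᵀ = A Δ²
  have hkey : ∀ i j, A i j * (Δ j j) ^ 2 = A j i * (Δ i i) ^ 2 := by
    have hΔt : Δᵀ = Δ := hΔdiag.isSymm
    have hΔinv : Δ * Δ⁻¹ = 1 := Matrix.mul_nonsing_inv Δ hΔunit
    have hΔinv' : Δ⁻¹ * Δ = 1 := Matrix.nonsing_inv_mul Δ hΔunit
    rw [Matrix.transpose_mul, Matrix.transpose_mul, hΔt, Matrix.transpose_nonsing_inv,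
      hΔt] at hsym
    have h2 : Δ * Δ * Aᵀ = A * (Δ * Δ) := by
      have h3 : Δ * (Δ * (Aᵀ * Δ⁻¹)) * Δ = Δ * (Δ⁻¹ * A * Δ) * Δ := by rw [hsym]
      calc Δ * Δ * Aᵀ = Δ * (Δ * (Aᵀ * Δ⁻¹)) * Δ := by
            rw [show Δ * (Δ * (Aᵀ * Δ⁻¹)) * Δ = Δ * Δ * Aᵀ * (Δ⁻¹ * Δ) from by noncomm_ring,
              hΔinv', Matrix.mul_one]
        _ = Δ * (Δ⁻¹ * A * Δ) * Δ := h3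
        _ = A * (Δ * Δ) := by
            rw [show Δ * (Δ⁻¹ * A * Δ) * Δ = Δ * Δ⁻¹ * (A * (Δ * Δ)) from by noncomm_ring,
              hΔinv, Matrix.one_mul]
    intro i j
    have h4 := congrFun (congrFun h2 j) i
    simp only [Matrix.mul_apply, Matrix.transpose_apply] at h4
    have hL : ∑ x, (∑ x_1, Δ j x_1 * Δ x_1 x) * A i x = Δ j j * Δ j j * A i j := by
      rw [Finset.sum_eq_single j]
      · rw [Finset.sum_eq_single j]
        · intro b _ hb; rw [hΔdiag hb.symm, zero_mul]
        · simp
      · intro b _ hb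
        rw [Finset.sum_eq_zero, zero_mul]
        intro c _
        rcases eq_or_ne j c with rfl | hc
        · rw [hΔdiag hb.symm, mul_zero]
        · rw [hΔdiag hc, zero_mul]
      · simp
    have hR : ∑ x, A j x * ∑ x_1, Δ x x_1 * Δ x_1 i = A j i * (Δ i i * Δ i i) := by
      rw [Finset.sum_eq_single i]
      · rw [Finset.sum_eq_single i]
        · intro b _ hb; rw [hΔdiag hb, mul_zero]
        · simp
      · intro b _ hb
        rw [Finset.sum_eq_zero, mul_zero]
        intro c _
        rcases eq_or_ne c i with rfl | hc
        · rw [hΔdiag hb, zero_mul]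
        · rw [hΔdiag hc, mul_zero]
      · simp
    rw [hL, hR] at h4
    rw [sq, sq]
    linarith
  -- multiply key relations along the cycle and cancel the nonzero product of squares
  have hP : (∏ j : Fin k, (Δ (v j) (v j)) ^ 2) ≠ 0 :=
    Finset.prod_ne_zero_iff.mpr fun j _ => pow_ne_zero 2 (hd (v j))
  apply mul_right_cancel₀ hP
  calc (∏ j : Fin k, A (v j) (v (finRotate k j))) * ∏ j : Fin k, (Δ (v j) (v j)) ^ 2
      = (∏ j : Fin k, A (v j) (v (finRotate k j))) *
          ∏ j : Fin k, (Δ (v (finRotate k j)) (v (finRotate k j))) ^ 2 := by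
        rw [Equiv.prod_comp (finRotate k) (fun j => (Δ (v j) (v j)) ^ 2)]
    _ = ∏ j : Fin k, A (v j) (v (finRotate k j)) *
          (Δ (v (finRotate k j)) (v (finRotate k j))) ^ 2 := by rw [Finset.prod_mul_distrib]
    _ = ∏ j : Fin k, A (v (finRotate k j)) (v j) * (Δ (v j) (v j)) ^ 2 :=
        Finset.prod_congr rfl fun j _ => hkey _ _
    _ = (∏ j : Fin k, A (v (finRotate k j)) (v j)) * ∏ j : Fin k, (Δ (v j) (v j)) ^ 2 := by
        rw [Finset.prod_mul_distrib]
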